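/- Let d_1,...,d_r be positive integers such that there exist integers q_1,...,q_r with gcd(q_i, d_i) = 1 for all i and the sum of q_i/d_i over i is an integer. Then lcm(d_1,...,d_r) equals the quotient of gcd over all i of (d_1⋯d_r)/d_i by the gcd over all pairs i ≠ j of (d_1⋯d_r)/(d_i d_j). (Assume r ≥ 2.) -/

import Mathlib

open Finset

lemma padic_lcm2 {p a b : ℕ} (hp : p.Prime) (ha : a ≠ 0) (hb : b ≠ 0) :
    padicValNat p (Nat.lcm a b) = max (padicValNat p a) (padicValNat p b) := by
  rw [← Nat.factorization_def _ hp, Nat.factorization_lcm ha hb,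
    Finsupp.sup_apply, Nat.factorization_def _ hp, Nat.factorization_def _ hp]

lemma padic_finset_gcd {p : ℕ} (hp : p.Prime) {ι : Type*} {s : Finset ι}
    (hs : s.Nonempty) (f : ι → ℕ) (hf : ∀ i ∈ s, f i ≠ 0) :
    padicValNat p (s.gcd f) = s.inf' hs (fun i => padicValNat p (f i)) := by
  have hgs : s.gcd f ≠ 0 := by
    simp only [Ne, Finset.gcd_eq_zero_iff, not_forall]
    obtain ⟨b, hb⟩ := hs
    exact ⟨b, hb, hf b hb⟩
  apply le_antisymm
  · obtain ⟨i, hi, hieq⟩ := Finset.exists_mem_eq_inf' hs (fun i => padicValNat p (f i))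
    rw [hieq]
    rw [← Nat.factorization_def _ hp, ← Nat.factorization_def _ hp]
    exact (Nat.factorization_le_iff_dvd hgs (hf i hi)).mpr (Finset.gcd_dvd hi) p
  · rw [← Nat.factorization_def _ hp,
      ← (Nat.Prime.pow_dvd_iff_le_factorization hp hgs
        (k := s.inf' hs fun i => padicValNat p (f i)))]
    apply Finset.dvd_gcd
    intro i hi
    calc p ^ (s.inf' hs fun i => padicValNat p (f i)) ∣ p ^ padicValNat p (f i) :=
          pow_dvd_pow _ (Finset.inf'_le _ hi)
      _ ∣ f i := pow_padicValNat_dvd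

lemma padic_finset_lcm {p : ℕ} (hp : p.Prime) {ι : Type*} [DecidableEq ι] {s : Finset ι}
    (f : ι → ℕ) (hf : ∀ i ∈ s, f i ≠ 0) :
    padicValNat p (s.lcm f) = s.sup (fun i => padicValNat p (f i)) := by
  induction s using Finset.cons_induction with
  | empty => simp
  | cons a s ha ih =>
      have hgs : s.lcm f ≠ 0 := by
        intro h
        obtain ⟨b, hb, hb0⟩ := Finset.lcm_eq_zero_iff.mp h
        exact hf b (Finset.mem_cons_of_mem hb) hb0
      rw [Finset.cons_eq_insert, Finset.lcm_insert]
      have h1 : GCDMonoid.lcm (f a) (s.lcm f) = Nat.lcm (f a) (s.lcm f) := rfl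
      rw [h1, padic_lcm2 hp (hf a (Finset.mem_cons_self a s)) hgs,
        ih (fun i hi => hf i (Finset.mem_cons_of_mem hi))]
      rw [Finset.sup_insert]

/-- Let `d 1, ..., d r` (`r ≥ 2`) be positive integers such that there exist nonzero
integers `q i` with `gcd (q i) (d i) = 1` and `∑ i, q i / d i ∈ ℤ`.  Then
`lcm (d 1, ..., d r)` equals the gcd over `i` of `(d 1 ⋯ d r) / d i` divided by the
gcd over pairs `i ≠ j` of `(d 1 ⋯ d r) / (d i * d j)`. -/
theorem lcm_eq_gcd_div_gcd_pairs (r : ℕ) (hr : 2 ≤ r)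
    (d : Fin r → ℕ) (hd : ∀ i, 0 < d i)
    (q : Fin r → ℤ) (hq0 : ∀ i, q i ≠ 0)
    (hcop : ∀ i, Int.gcd (q i) (d i) = 1)
    (hsum : ∃ z : ℤ, ∑ i, (q i : ℚ) / (d i : ℚ) = (z : ℚ)) :
    Finset.univ.lcm d
      = (Finset.univ.gcd fun i => (∏ j, d j) / d i)
        / ((Finset.univ : Finset (Fin r)).offDiag.gcd
            fun p => (∏ j, d j) / (d p.1 * d p.2)) := by
  classical
  obtain ⟨z, hz⟩ := hsum
  set P := ∏ j, d j with hPdef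
  have hP : P ≠ 0 := (Finset.prod_pos fun i _ => hd i).ne'
  have hdvd : ∀ i, d i ∣ P := fun i => Finset.dvd_prod_of_mem d (mem_univ i)
  have hdvd2 : ∀ i j : Fin r, i ≠ j → d i * d j ∣ P := by
    intro i j hij
    rw [← Finset.prod_pair hij]
    exact Finset.prod_dvd_prod_of_subset _ _ d (subset_univ _)
  have hPd : ∀ i, P / d i ≠ 0 :=
    fun i => (Nat.div_pos (Nat.le_of_dvd (Nat.pos_of_ne_zero hP) (hdvd i)) (hd i)).ne'
  have hPd2 : ∀ pr ∈ (univ : Finset (Fin r)).offDiag, P / (d pr.1 * d pr.2) ≠ 0 := by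
    intro pr hpr
    obtain ⟨-, -, hne⟩ := Finset.mem_offDiag.mp hpr
    exact (Nat.div_pos (Nat.le_of_dvd (Nat.pos_of_ne_zero hP) (hdvd2 _ _ hne))
      (Nat.mul_pos (hd _) (hd _))).ne'
  set a0 : Fin r := ⟨0, by omega⟩ with ha0
  set a1 : Fin r := ⟨1, by omega⟩ with ha1
  have hne : (univ : Finset (Fin r)).Nonempty := ⟨a0, mem_univ _⟩
  have h01 : a0 ≠ a1 := by simp [ha0, ha1, Fin.ext_iff]
  have hod : ((univ : Finset (Fin r)).offDiag).Nonempty :=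
    ⟨(a0, a1), Finset.mem_offDiag.mpr ⟨mem_univ _, mem_univ _, h01⟩⟩
  have hL : univ.lcm d ≠ 0 := by
    intro h
    obtain ⟨b, -, hb0⟩ := Finset.lcm_eq_zero_iff.mp h
    exact (hd b).ne' hb0
  have hA : (univ.gcd fun i => P / d i) ≠ 0 := by
    simp only [Ne, Finset.gcd_eq_zero_iff, not_forall]
    exact ⟨a0, mem_univ _, hPd _⟩
  have hB : ((univ : Finset (Fin r)).offDiag.gcd fun pr => P / (d pr.1 * d pr.2)) ≠ 0 := by
    simp only [Ne, Finset.gcd_eq_zero_iff, not_forall]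
    obtain ⟨pr, hpr⟩ := hod
    exact ⟨pr, hpr, hPd2 pr hpr⟩
  -- integer sum identity
  have hS : ∑ i, q i * ((P / d i : ℕ) : ℤ) = z * (P : ℤ) := by
    have hcast : ∀ i, ((P / d i : ℕ) : ℚ) = (P : ℚ) / (d i : ℚ) :=
      fun i => Nat.cast_div (hdvd i) (by exact_mod_cast (hd i).ne')
    have hQ : (∑ i, (q i : ℚ) * ((P / d i : ℕ) : ℚ)) = (z : ℚ) * (P : ℚ) := by
      calc ∑ i, (q i : ℚ) * ((P / d i : ℕ) : ℚ)
          = ∑ i, ((q i : ℚ) / (d i : ℚ)) * (P : ℚ) := by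
            refine Finset.sum_congr rfl fun i _ => ?_
            rw [hcast i]; ring
        _ = (∑ i, (q i : ℚ) / (d i : ℚ)) * (P : ℚ) := (Finset.sum_mul _ _ _).symm
        _ = (z : ℚ) * (P : ℚ) := by rw [hz]
    have h2 : ((∑ i, q i * ((P / d i : ℕ) : ℤ) : ℤ) : ℚ) = ((z * (P : ℤ) : ℤ) : ℚ) := by
      push_cast
      push_cast at hQ
      convert hQ using 2
      norm_cast
      rw [Int.cast_mul, Int.cast_natCast]
    exact_mod_cast h2
  -- main per-prime identity
  have key : (univ.gcd fun i => P / d i)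
      = (univ.lcm d) * ((univ : Finset (Fin r)).offDiag.gcd fun pr => P / (d pr.1 * d pr.2)) := by
    rw [Nat.eq_iff_prime_padicValNat_eq _ _ hA (mul_ne_zero hL hB)]
    intro p hp
    set F : Fin r → ℕ := fun i => padicValNat p (d i) with hF
    have hV : padicValNat p P = ∑ i, F i := by
      rw [← Nat.factorization_def _ hp, hPdef, Nat.factorization_prod (fun i _ => (hd i).ne')]
      rw [Finsupp.finset_sum_apply]
      exact Finset.sum_congr rfl fun i _ => Nat.factorization_def _ hp
    set V := ∑ i, F i with hVdef
    have hFle : ∀ i, F i ≤ V :=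
      fun i => Finset.single_le_sum (fun j _ => Nat.zero_le _) (mem_univ i)
    have hdivval : ∀ i, padicValNat p (P / d i) = V - F i := by
      intro i
      rw [← Nat.factorization_def _ hp, Nat.factorization_div (hdvd i), Finsupp.tsub_apply,
        Nat.factorization_def _ hp, Nat.factorization_def _ hp, hV]
    have hdivval2 : ∀ i j : Fin r, i ≠ j →
        padicValNat p (P / (d i * d j)) = V - (F i + F j) := by
      intro i j hij
      rw [← Nat.factorization_def _ hp, Nat.factorization_div (hdvd2 i j hij), Finsupp.tsub_apply,
        Nat.factorization_mul (hd i).ne' (hd j).ne', Finsupp.add_apply,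
        Nat.factorization_def _ hp, Nat.factorization_def _ hp, Nat.factorization_def _ hp, hV]
    set M := univ.sup' hne F with hM
    have hMle : ∀ i, F i ≤ M := fun i => Finset.le_sup' F (mem_univ i)
    -- two indices attain the max
    have key2 : ∃ i j : Fin r, i ≠ j ∧ F i = M ∧ F j = M := by
      by_cases hM0 : M = 0
      · refine ⟨a0, a1, h01, ?_, ?_⟩
        · have := hMle a0; omega
        · have := hMle a1; omega
      · obtain ⟨i0, -, hi0'⟩ := Finset.exists_mem_eq_sup' hne F
        have hi0 : M = F i0 := hM.trans hi0'
        by_contra hno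
        push_neg at hno
        have hlt : ∀ j, j ≠ i0 → F j < M := fun j hj =>
          lt_of_le_of_ne (hMle j) (hno i0 j (fun h => hj h.symm) hi0.symm)
        have hMV : M ≤ V := hi0 ▸ hFle i0
        set k := V - M + 1 with hk
        have hM1 : 1 ≤ M := Nat.pos_of_ne_zero hM0
        have hkV : k ≤ V := by omega
        have hdz : (p : ℤ) ^ k ∣ z * (P : ℤ) := by
          have h1 : p ^ k ∣ P := (pow_dvd_pow p hkV).trans (hV ▸ pow_padicValNat_dvd)
          exact Dvd.dvd.mul_left (by exact_mod_cast Int.natCast_dvd_natCast.mpr h1) z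
        have hdj : ∀ j ∈ univ.erase i0, (p : ℤ) ^ k ∣ q j * ((P / d j : ℕ) : ℤ) := by
          intro j hj
          have hj' : j ≠ i0 := (Finset.mem_erase.mp hj).1
          have h1 : k ≤ padicValNat p (P / d j) := by
            rw [hdivval j]
            have := hlt j hj'
            omega
          have h2 : p ^ k ∣ P / d j := (pow_dvd_pow p h1).trans pow_padicValNat_dvd
          exact Dvd.dvd.mul_left (by exact_mod_cast Int.natCast_dvd_natCast.mpr h2) (q j)
        have hdi0 : (p : ℤ) ^ k ∣ q i0 * ((P / d i0 : ℕ) : ℤ) := by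
          have hsplit := eq_sub_of_add_eq
            (Finset.add_sum_erase univ (fun j => q j * ((P / d j : ℕ) : ℤ)) (mem_univ i0))
          rw [hS] at hsplit
          have hsplit' : q i0 * ((P / d i0 : ℕ) : ℤ)
              = z * (P : ℤ) - ∑ x ∈ univ.erase i0, q x * ((P / d x : ℕ) : ℤ) := hsplit
          rw [hsplit']
          exact dvd_sub hdz (Finset.dvd_sum hdj)
        have hpd : p ∣ d i0 :=
          (dvd_pow_self p hM0).trans (hi0 ▸ (pow_padicValNat_dvd : p ^ F i0 ∣ d i0))
        have hpq : ¬ (p : ℤ) ∣ q i0 := by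
          intro hdq
          have h1 : p ∣ (q i0).natAbs := by
            have := Int.natAbs_dvd_natAbs.mpr hdq
            simpa using this
          have h2 : p ∣ ((d i0 : ℤ)).natAbs := by simpa using hpd
          have h3 : p ∣ Int.gcd (q i0) (d i0) := Nat.dvd_gcd h1 h2
          rw [hcop i0] at h3
          exact hp.ne_one (Nat.dvd_one.mp h3)
        have hcopk : IsCoprime ((p : ℤ) ^ k) (q i0) :=
          (((Nat.prime_iff_prime_int.mp hp).coprime_iff_not_dvd).mpr hpq).pow_left
        have hX : (p : ℤ) ^ k ∣ ((P / d i0 : ℕ) : ℤ) := hcopk.dvd_of_dvd_mul_left hdi0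
        have hXn : p ^ k ∣ P / d i0 := by exact_mod_cast hX
        have hle : k ≤ padicValNat p (P / d i0) := by
          have := (Nat.Prime.pow_dvd_iff_le_factorization hp (hPd i0)).mp hXn
          rwa [Nat.factorization_def _ hp] at this
        rw [hdivval i0, ← hi0] at hle
        omega
    obtain ⟨i1, j1, hij1, hi1, hj1⟩ := key2
    have h2MV : M + M ≤ V := by
      have : F i1 + F j1 ≤ V := by
        rw [← Finset.sum_pair hij1]
        exact Finset.sum_le_sum_of_subset (subset_univ _)
      omega
    have vL : padicValNat p (univ.lcm d) = M := by
      rw [padic_finset_lcm hp d (fun i _ => (hd i).ne'), hM, Finset.sup'_eq_sup hne F]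
    have vA : padicValNat p (univ.gcd fun i => P / d i) = V - M := by
      rw [padic_finset_gcd hp hne _ (fun i _ => hPd i)]
      apply le_antisymm
      · calc (univ.inf' hne fun i => padicValNat p (P / d i)) ≤ padicValNat p (P / d i1) :=
              Finset.inf'_le _ (mem_univ _)
          _ = V - M := by rw [hdivval i1, hi1]
      · apply Finset.le_inf'
        intro i _
        rw [hdivval i]
        have := hMle i
        omega
    have vB : padicValNat p ((univ : Finset (Fin r)).offDiag.gcd
        fun pr => P / (d pr.1 * d pr.2)) = V - (M + M) := by
      rw [padic_finset_gcd hp hod _ hPd2]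
      apply le_antisymm
      · have hmem : (i1, j1) ∈ (univ : Finset (Fin r)).offDiag :=
          Finset.mem_offDiag.mpr ⟨mem_univ _, mem_univ _, hij1⟩
        calc ((univ : Finset (Fin r)).offDiag.inf' hod
              fun pr => padicValNat p (P / (d pr.1 * d pr.2)))
            ≤ padicValNat p (P / (d i1 * d j1)) := Finset.inf'_le _ hmem
          _ = V - (M + M) := by rw [hdivval2 i1 j1 hij1, hi1, hj1]
      · apply Finset.le_inf'
        intro pr hpr
        obtain ⟨-, -, hne'⟩ := Finset.mem_offDiag.mp hpr
        rw [hdivval2 _ _ hne']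
        have := hMle pr.1
        have := hMle pr.2
        omega
    have vmul : padicValNat p ((univ.lcm d) * ((univ : Finset (Fin r)).offDiag.gcd
        fun pr => P / (d pr.1 * d pr.2)))
        = padicValNat p (univ.lcm d) + padicValNat p ((univ : Finset (Fin r)).offDiag.gcd
        fun pr => P / (d pr.1 * d pr.2)) := by
      rw [← Nat.factorization_def _ hp, Nat.factorization_mul hL hB, Finsupp.add_apply,
        Nat.factorization_def _ hp, Nat.factorization_def _ hp]
    rw [vA, vmul, vL, vB]
    omega
  rw [key]
  exact (Nat.mul_div_cancel (m := Finset.univ.lcm d) (Nat.pos_of_ne_zero hB)).symm
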